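/- For every d ≥ 1 and every T > 0 there exists a constant C = C(d,T) < ∞ such that for all t ∈ (0,T] and all x, y, z ∈ ℝ^d with x ≠ z and ‖x−z‖ ≥ 2‖x−y‖, one has |G_{[0,t]}(x−z) − G_{[0,t]}(y−z)| ≤ C ‖x−y‖ (1 + ‖x−z‖^{1−d}). -/

import Mathlib

open Real MeasureTheory Set
set_option maxHeartbeats 1000000

private lemma aux_exp_lip {a b m : ℝ} (ha : m ≤ a) (hb : m ≤ b) :
    |Real.exp (-a) - Real.exp (-b)| ≤ |a - b| * Real.exp (-m) := by
  wlog h : b ≤ a generalizing a b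
  · rw [abs_sub_comm, abs_sub_comm a b]; exact this hb ha (le_of_not_ge h)
  have h1 : Real.exp (-a) ≤ Real.exp (-b) := Real.exp_le_exp.2 (by linarith)
  have h2 : Real.exp (-a) = Real.exp (-b) * Real.exp (b - a) := by
    rw [← Real.exp_add]; ring_nf
  have h3 : (b - a) + 1 ≤ Real.exp (b - a) := Real.add_one_le_exp _
  have h4 : Real.exp (-b) ≤ Real.exp (-m) := Real.exp_le_exp.2 (by linarith)
  have h5 : Real.exp (-b) - Real.exp (-a) ≤ (a - b) * Real.exp (-b) := by nlinarith [Real.exp_pos (-b)]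
  rw [abs_of_nonpos (by linarith), abs_of_nonneg (by linarith)]
  nlinarith [Real.exp_pos (-b), Real.exp_pos (-m)]

private lemma aux_rpow_exp_bound {c k t : ℝ} (hc : 0 < c) (n : ℕ) (hk : k ≤ n) {s : ℝ}
    (hs : 0 < s) (hst : s ≤ t) :
    s ^ (-k) * Real.exp (-(c / s)) ≤ (n.factorial / c ^ n) * t ^ ((n : ℝ) - k) := by
  have ht : 0 < t := lt_of_lt_of_le hs hst
  have hcs : 0 < c / s := by positivity
  have h1 : Real.exp (-(c / s)) ≤ n.factorial * (s / c) ^ n := by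
    rw [Real.exp_neg]
    have h2 : (c / s) ^ n / n.factorial ≤ Real.exp (c / s) :=
      Real.pow_div_factorial_le_exp (x := c / s) hcs.le n
    have h3 : (0:ℝ) < (c / s) ^ n / n.factorial := by positivity
    calc (Real.exp (c / s))⁻¹ ≤ ((c / s) ^ n / n.factorial)⁻¹ := by
          exact inv_anti₀ h3 h2
      _ = n.factorial * (s / c) ^ n := by
          rw [div_pow, div_pow]
          field_simp
  calc s ^ (-k) * Real.exp (-(c / s)) ≤ s ^ (-k) * (n.factorial * (s / c) ^ n) := by
        apply mul_le_mul_of_nonneg_left h1 (by positivity)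
    _ = (n.factorial / c ^ n) * s ^ ((n : ℝ) - k) := by
        rw [div_pow, Real.rpow_sub hs, Real.rpow_natCast]
        have : s ^ (-k) = (s ^ k)⁻¹ := Real.rpow_neg hs.le k
        rw [this]
        field_simp
    _ ≤ (n.factorial / c ^ n) * t ^ ((n : ℝ) - k) := by
        apply mul_le_mul_of_nonneg_left _ (by positivity)
        exact Real.rpow_le_rpow hs.le hst (by linarith)

private lemma aux_meas {d : ℕ} {r : ℝ} :
    Measurable (fun s : ℝ => (4 * π * s) ^ (-(d:ℝ)/2) * Real.exp (-r^2 / (4 * s))) := by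
  apply Measurable.mul
  · exact (measurable_const.mul measurable_id).pow measurable_const
  · exact Real.measurable_exp.comp (measurable_const.div (measurable_const.mul measurable_id))

private lemma aux_g_meas {d : ℕ} {c : ℝ} :
    Measurable (fun s : ℝ => s ^ (-(d:ℝ)/2 - 1) * Real.exp (-(c/s))) := by
  apply Measurable.mul
  · exact measurable_id.pow measurable_const
  · exact Real.measurable_exp.comp (measurable_const.div measurable_id).neg

private lemma aux_integrable (d : ℕ) {r t : ℝ} (hr : 0 < r) (ht : 0 < t) :
    IntegrableOn (fun s : ℝ => (4 * π * s) ^ (-(d:ℝ)/2) * Real.exp (-r^2 / (4 * s)))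
      (Ioc 0 t) := by
  have hc : (0:ℝ) < r^2/4 := by positivity
  refine Measure.integrableOn_of_bounded (μ := volume)
    (M := (4*π) ^ (-(d:ℝ)/2) * ((d.factorial / (r^2/4) ^ d) * t ^ ((d : ℝ) - (d:ℝ)/2))) ?_ ?_ ?_
  · simp [measure_Ioc_lt_top.ne]
  · exact aux_meas.aestronglyMeasurable
  · filter_upwards [ae_restrict_mem measurableSet_Ioc] with s hs
    obtain ⟨hs0, hst⟩ := hs
    have h1 : (4 * π * s) ^ (-(d:ℝ)/2) = (4*π) ^ (-(d:ℝ)/2) * s ^ (-(d:ℝ)/2) := by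
      rw [mul_assoc, show (4:ℝ) * (π * s) = (4*π) * s by ring,
        Real.mul_rpow (by positivity) hs0.le]
    have h2 : -r^2 / (4 * s) = -((r^2/4) / s) := by field_simp
    have hk : -(d:ℝ)/2 = -((d:ℝ)/2) := by ring
    rw [Real.norm_eq_abs, h1, h2, abs_mul, abs_mul,
      abs_of_nonneg (Real.rpow_nonneg (by positivity : (0:ℝ) ≤ 4*π) _),
      abs_of_nonneg (Real.rpow_nonneg hs0.le _), abs_of_nonneg (Real.exp_pos _).le, mul_assoc]
    apply mul_le_mul_of_nonneg_left _ (Real.rpow_nonneg (by positivity) _)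
    rw [hk]
    exact aux_rpow_exp_bound hc d (by simp [div_le_iff₀]; nlinarith [Nat.cast_nonneg (α := ℝ) d])
      hs0 hst

private lemma aux_g_integrable (d : ℕ) {c t : ℝ} (hc : 0 < c) (ht : 0 < t) :
    IntegrableOn (fun s : ℝ => s ^ (-(d:ℝ)/2 - 1) * Real.exp (-(c/s))) (Ioc 0 t) := by
  refine Measure.integrableOn_of_bounded (μ := volume)
    (M := ((d+1).factorial / c ^ (d+1)) * t ^ (((d+1 : ℕ) : ℝ) - ((d:ℝ)/2 + 1))) ?_ ?_ ?_
  · simp [measure_Ioc_lt_top.ne]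
  · exact aux_g_meas.aestronglyMeasurable
  · filter_upwards [ae_restrict_mem measurableSet_Ioc] with s hs
    obtain ⟨hs0, hst⟩ := hs
    have hk : -(d:ℝ)/2 - 1 = -((d:ℝ)/2 + 1) := by ring
    rw [Real.norm_eq_abs, abs_mul, abs_of_nonneg (Real.rpow_nonneg hs0.le _),
      abs_of_nonneg (Real.exp_pos _).le, hk]
    exact aux_rpow_exp_bound hc (d+1)
      (by push_cast; linarith [Nat.cast_nonneg (α := ℝ) d]) hs0 hst

private lemma aux_g_integrable_Ioi (d : ℕ) (hd : 1 ≤ d) {c : ℝ} (hc : 0 < c) :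
    IntegrableOn (fun s : ℝ => s ^ (-(d:ℝ)/2 - 1) * Real.exp (-(c/s))) (Ioi 0) := by
  have hsplit : Ioi (0:ℝ) = Ioc 0 1 ∪ Ioi 1 := (Ioc_union_Ioi_eq_Ioi zero_le_one).symm
  rw [hsplit]
  apply IntegrableOn.union (aux_g_integrable d hc zero_lt_one)
  have hexp : -(d:ℝ)/2 - 1 < -1 := by
    have : (1:ℝ) ≤ d := by exact_mod_cast hd
    linarith
  apply Integrable.mono (integrableOn_Ioi_rpow_of_lt hexp zero_lt_one)
  · exact aux_g_meas.aestronglyMeasurable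
  · filter_upwards [ae_restrict_mem measurableSet_Ioi] with s hs
    have hs0 : (0:ℝ) < s := lt_trans zero_lt_one hs
    rw [Real.norm_eq_abs, Real.norm_eq_abs, abs_mul,
      abs_of_nonneg (Real.rpow_nonneg hs0.le _), abs_of_nonneg (Real.exp_pos _).le]
    nth_rewrite 2 [← mul_one (s ^ (-(d:ℝ)/2 - 1))]
    apply mul_le_mul_of_nonneg_left _ (Real.rpow_nonneg hs0.le _)
    rw [Real.exp_le_one_iff]
    have : 0 < c / s := by positivity
    linarith

private lemma aux_scaling (d : ℕ) {c : ℝ} (hc : 0 < c) :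
    ∫ s in Ioi (0:ℝ), s ^ (-(d:ℝ)/2 - 1) * Real.exp (-(c/s)) =
      c ^ (-(d:ℝ)/2) * ∫ s in Ioi (0:ℝ), s ^ (-(d:ℝ)/2 - 1) * Real.exp (-(1/s)) := by
  have h := MeasureTheory.integral_comp_mul_left_Ioi
    (fun u : ℝ => u ^ (-(d:ℝ)/2 - 1) * Real.exp (-(c/u))) 0 hc
  rw [mul_zero] at h
  have h2 : EqOn (fun x : ℝ => (c * x) ^ (-(d:ℝ)/2 - 1) * Real.exp (-(c/(c*x))))
      (fun x : ℝ => c ^ (-(d:ℝ)/2 - 1) * (x ^ (-(d:ℝ)/2 - 1) * Real.exp (-(1/x))))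
      (Ioi (0:ℝ)) := by
    intro x hx
    have hx0 : (0:ℝ) < x := hx
    simp only
    rw [Real.mul_rpow hc.le hx0.le]
    have hcc : c / (c * x) = 1 / x := by
      field_simp
    rw [hcc]
    ring
  rw [setIntegral_congr_fun measurableSet_Ioi h2, MeasureTheory.integral_const_mul] at h
  have hce : c ^ (-(d:ℝ)/2) = c * c ^ (-(d:ℝ)/2 - 1) := by
    have h4 := Real.rpow_add hc 1 (-(d:ℝ)/2 - 1)
    have h5 : (1 : ℝ) + (-(d:ℝ)/2 - 1) = -(d:ℝ)/2 := by ring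
    rw [h5, Real.rpow_one] at h4
    exact h4
  rw [smul_eq_mul] at h
  rw [hce]
  field_simp at h ⊢
  linarith [h]

theorem heat_kernel_space_increment_bound (d : ℕ) (hd : 1 ≤ d) (T : ℝ) (hT : 0 < T) :
    ∃ C : ℝ, ∀ t ∈ Set.Ioc (0:ℝ) T, ∀ x y z : EuclideanSpace ℝ (Fin d),
      x ≠ z → 2 * ‖x - y‖ ≤ ‖x - z‖ →
      |(∫ s in (0:ℝ)..t, (4 * π * s) ^ (-(d:ℝ)/2) * Real.exp (-‖x - z‖^2 / (4 * s)))
        - (∫ s in (0:ℝ)..t, (4 * π * s) ^ (-(d:ℝ)/2) * Real.exp (-‖y - z‖^2 / (4 * s)))|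
        ≤ C * ‖x - y‖ * (1 + ‖x - z‖ ^ ((1:ℝ) - d)) := by
  classical
  set I1 : ℝ := ∫ s in Ioi (0:ℝ), s ^ (-(d:ℝ)/2 - 1) * Real.exp (-(1/s)) with hI1
  have hI1nonneg : 0 ≤ I1 := setIntegral_nonneg measurableSet_Ioi (fun s hs => by
    have : (0:ℝ) < s := hs
    positivity)
  set C : ℝ := (5/8) * (4*π) ^ (-(d:ℝ)/2) * 16 ^ ((d:ℝ)/2) * I1 with hCdef
  have hC0 : 0 ≤ C := by
    apply mul_nonneg _ hI1nonneg
    positivity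
  refine ⟨C, ?_⟩
  rintro t ⟨ht0, htT⟩ x y z hxz hsep
  set r1 := ‖x - z‖ with hr1def
  set r2 := ‖y - z‖ with hr2def
  set δ := ‖x - y‖ with hδdef
  have hr1 : 0 < r1 := by
    rw [hr1def, norm_pos_iff]
    exact sub_ne_zero_of_ne hxz
  have hδ0 : 0 ≤ δ := norm_nonneg _
  have h12 : |r1 - r2| ≤ δ := by
    have h := abs_norm_sub_norm_le (x - z) (y - z)
    rwa [sub_sub_sub_cancel_right] at h
  have habs := abs_le.1 h12
  have hδr : 2 * δ ≤ r1 := hsep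
  have hr2low : r1 / 2 ≤ r2 := by linarith
  have hr2hi : r2 ≤ 3 / 2 * r1 := by linarith
  have hr2 : 0 < r2 := by linarith
  set c : ℝ := r1 ^ 2 / 16 with hcdef
  have hc : 0 < c := by positivity
  set Kc : ℝ := 5 * δ * r1 / 8 * (4*π) ^ (-(d:ℝ)/2) with hKdef
  have hKc : 0 ≤ Kc := by positivity
  set g : ℝ → ℝ := fun s => Kc * (s ^ (-(d:ℝ)/2 - 1) * Real.exp (-(c/s))) with hgdef
  set A : ℝ → ℝ := fun s => (4 * π * s) ^ (-(d:ℝ)/2) * Real.exp (-r1^2 / (4 * s)) with hAdef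
  set B : ℝ → ℝ := fun s => (4 * π * s) ^ (-(d:ℝ)/2) * Real.exp (-r2^2 / (4 * s)) with hBdef
  have hIA : IntegrableOn A (Ioc 0 t) := aux_integrable d hr1 ht0
  have hIB : IntegrableOn B (Ioc 0 t) := aux_integrable d hr2 ht0
  have hIg0 : IntegrableOn (fun s : ℝ => s ^ (-(d:ℝ)/2 - 1) * Real.exp (-(c/s))) (Ioc 0 t) :=
    aux_g_integrable d hc ht0
  have hIg : IntegrableOn g (Ioc 0 t) := hIg0.const_mul Kc
  have hIgIoi : IntegrableOn g (Ioi 0) := (aux_g_integrable_Ioi d hd hc).const_mul Kc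
  rw [intervalIntegral.integral_of_le ht0.le, intervalIntegral.integral_of_le ht0.le]
  have hpt : ∀ s ∈ Ioc (0:ℝ) t, |A s - B s| ≤ g s := by
    intro s hs
    obtain ⟨hs0, hst⟩ := hs
    have e1 : -r1 ^ 2 / (4 * s) = -(r1 ^ 2 / (4 * s)) := by ring
    have e2 : -r2 ^ 2 / (4 * s) = -(r2 ^ 2 / (4 * s)) := by ring
    have hm1 : c / s ≤ r1 ^ 2 / (4 * s) := by
      rw [show r1 ^ 2 / (4 * s) = (r1 ^ 2 / 4) / s by ring]
      gcongr
      rw [hcdef]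
      nlinarith [sq_nonneg r1]
    have hm2 : c / s ≤ r2 ^ 2 / (4 * s) := by
      rw [show r2 ^ 2 / (4 * s) = (r2 ^ 2 / 4) / s by ring]
      gcongr
      rw [hcdef]
      nlinarith
    have key := aux_exp_lip hm1 hm2
    have hab : |r1 ^ 2 / (4 * s) - r2 ^ 2 / (4 * s)| ≤ δ * (5 / 2 * r1) / (4 * s) := by
      rw [div_sub_div_same, abs_div, abs_of_pos (by positivity : (0:ℝ) < 4 * s)]
      gcongr
      rw [show r1 ^ 2 - r2 ^ 2 = (r1 - r2) * (r1 + r2) by ring, abs_mul]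
      have h1 : |r1 + r2| ≤ 5 / 2 * r1 := by
        rw [abs_of_nonneg (by linarith)]
        linarith
      exact mul_le_mul h12 h1 (abs_nonneg _) hδ0
    have hrpos : (0:ℝ) < (4 * π * s) ^ (-(d:ℝ)/2) := by positivity
    have step : |A s - B s| ≤ (4 * π * s) ^ (-(d:ℝ)/2)
        * (δ * (5 / 2 * r1) / (4 * s) * Real.exp (-(c/s))) := by
      rw [hAdef, hBdef]
      simp only
      rw [e1, e2, ← mul_sub, abs_mul, abs_of_pos hrpos]
      apply mul_le_mul_of_nonneg_left _ hrpos.le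
      calc |Real.exp (-(r1 ^ 2 / (4 * s))) - Real.exp (-(r2 ^ 2 / (4 * s)))|
          ≤ |r1 ^ 2 / (4 * s) - r2 ^ 2 / (4 * s)| * Real.exp (-(c/s)) := key
        _ ≤ δ * (5 / 2 * r1) / (4 * s) * Real.exp (-(c/s)) := by
            apply mul_le_mul_of_nonneg_right hab (Real.exp_pos _).le
    refine step.trans (le_of_eq ?_)
    rw [hgdef]
    simp only
    rw [show (4:ℝ) * π * s = (4*π) * s by ring, Real.mul_rpow (by positivity) hs0.le,
      Real.rpow_sub hs0, Real.rpow_one, hKdef]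
    field_simp
    ring
  calc |(∫ s in Ioc (0:ℝ) t, A s) - ∫ s in Ioc (0:ℝ) t, B s|
      = |∫ s in Ioc (0:ℝ) t, (A s - B s)| := by rw [integral_sub hIA hIB]
    _ ≤ ∫ s in Ioc (0:ℝ) t, |A s - B s| := by
        simpa [Real.norm_eq_abs] using
          norm_integral_le_integral_norm (μ := volume.restrict (Ioc (0:ℝ) t))
            (fun s => A s - B s)
    _ ≤ ∫ s in Ioc (0:ℝ) t, g s :=
        setIntegral_mono_on ((hIA.sub hIB).abs) hIg measurableSet_Ioc hpt
    _ ≤ ∫ s in Ioi (0:ℝ), g s := by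
        apply setIntegral_mono_set hIgIoi
        · filter_upwards [ae_restrict_mem measurableSet_Ioi] with s hs
          have hs0 : (0:ℝ) < s := hs
          exact mul_nonneg hKc
            (mul_nonneg (Real.rpow_nonneg hs0.le _) (Real.exp_pos _).le)
        · exact HasSubset.Subset.eventuallyLE Ioc_subset_Ioi_self
    _ = Kc * (c ^ (-(d:ℝ)/2) * I1) := by
        rw [hgdef]
        rw [MeasureTheory.integral_const_mul, aux_scaling d hc]
    _ ≤ C * δ * (1 + r1 ^ ((1:ℝ) - (d:ℝ))) := by
        have e3 : ((r1 ^ 2 : ℝ)) ^ (-(d:ℝ)/2) = r1 ^ (-(d:ℝ)) := by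
          rw [← Real.rpow_natCast r1 2, ← Real.rpow_mul hr1.le]
          congr 1
          push_cast
          ring
        have e4 : c ^ (-(d:ℝ)/2) = r1 ^ (-(d:ℝ)) * 16 ^ ((d:ℝ)/2) := by
          rw [hcdef, Real.div_rpow (by positivity) (by norm_num), e3,
            show -(d:ℝ)/2 = -((d:ℝ)/2) by ring, Real.rpow_neg (by norm_num : (0:ℝ) ≤ 16),
            div_inv_eq_mul]
        have e5 : r1 * r1 ^ (-(d:ℝ)) = r1 ^ ((1:ℝ) - (d:ℝ)) := by
          rw [show (1:ℝ) - (d:ℝ) = 1 + (-(d:ℝ)) by ring, Real.rpow_add hr1, Real.rpow_one]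
        have heq : Kc * (c ^ (-(d:ℝ)/2) * I1) = C * δ * (r1 * r1 ^ (-(d:ℝ))) := by
          rw [hKdef, e4, hCdef]
          ring
        rw [heq, e5]
        have hr1pow : 0 ≤ r1 ^ ((1:ℝ) - (d:ℝ)) := Real.rpow_nonneg hr1.le _
        have hCδ : 0 ≤ C * δ := mul_nonneg hC0 hδ0
        nlinarith
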